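/- Residual formula for the exponential approximation: suppose AV = V(T ⊗ I_p) + W(τ E^T ⊗ I_p) with V ∈ ℝ^{n×2mp} having F-orthonormal block columns, W a unit-Frobenius-norm block F-orthogonal to them, τ ∈ ℝ^{1×2}, E ∈ ℝ^{2m×2} the last two columns of I_{2m}. Define U(t) = β V(exp(−tT)e_1 ⊗ I_p) for β ∈ ℝ. Then the residual R(t) = U'(t) + A U(t) satisfies R(t) = β W(τ E^T exp(−tT) e_1 ⊗ I_p) and hence ‖R(t)‖_F = |β| · ‖τ E^T exp(−tT) e_1‖_2. -/

import Mathlib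

open Matrix BigOperators

/-- Frobenius inner product `⟨X,Y⟩_F = trace(Yᵀ X)`. -/
noncomputable def finner {n p : ℕ} (X Y : Matrix (Fin n) (Fin p) ℝ) : ℝ :=
  Matrix.trace (Yᵀ * X)

/-- Frobenius norm. -/
noncomputable def fnorm {n p : ℕ} (X : Matrix (Fin n) (Fin p) ℝ) : ℝ :=
  Real.sqrt (finner X X)

/-- `E = [e_{2m−1}, e_{2m}]`, the last two columns of `I_{2m}` (0-indexed). -/
def Ecols (m : ℕ) : Matrix (Fin (2 * m)) (Fin 2) ℝ :=
  fun j k => if (j : ℕ) = 2 * m - 2 + (k : ℕ) then 1 else 0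

section aux

attribute [local instance] Matrix.linftyOpNormedRing Matrix.linftyOpNormedAlgebra
  Matrix.linftyOpNormedAddCommGroup

lemma exp_entry_hasDerivAt {N : ℕ} (T : Matrix (Fin N) (Fin N) ℝ) (t : ℝ) (i z : Fin N) :
    HasDerivAt (fun s : ℝ => (NormedSpace.exp ((-s) • T)) i z)
      ((-T * NormedSpace.exp ((-t) • T)) i z) t := by
  have h1 : HasDerivAt (fun u : ℝ => NormedSpace.exp (u • (-T)))
      ((-T) * NormedSpace.exp (t • (-T))) t :=
    hasDerivAt_exp_smul_const' (-T) t
  let L : Matrix (Fin N) (Fin N) ℝ →ₗ[ℝ] ℝ :=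
    { toFun := fun M => M i z
      map_add' := fun M M' => rfl
      map_smul' := fun c M => rfl }
  have h2 := (L.toContinuousLinearMap.hasFDerivAt
    (x := NormedSpace.exp (t • (-T)))).comp_hasDerivAt t h1
  have h3 : ∀ s : ℝ, s • (-T) = (-s) • T := by intro s; rw [smul_neg, neg_smul]
  simp only [h3] at h2
  exact h2

end aux

lemma finner_smul_smul {n p : ℕ} (a b : ℝ) (X Y : Matrix (Fin n) (Fin p) ℝ) :
    finner (a • X) (b • Y) = a * b * finner X Y := by
  simp [finner, Matrix.trace, Matrix.mul_apply, Matrix.diag, Finset.mul_sum,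
    Finset.sum_mul, mul_assoc, mul_comm, mul_left_comm]

/-- residual formula for the exponential approximation:
with `U(t) = β V(exp(−tT)e₁ ⊗ I_p)`, the residual `R(t) = U'(t) + A U(t)` equals
`β W(τ Eᵀ exp(−tT) e₁ ⊗ I_p)` and `‖R(t)‖_F = |β| · ‖τ Eᵀ exp(−tT) e₁‖₂`
(a scalar, so the norm is its absolute value). -/
theorem exp_residual_formula {n p m : ℕ} (hm : 0 < m)
    (A : Matrix (Fin n) (Fin n) ℝ)
    (T : Matrix (Fin (2 * m)) (Fin (2 * m)) ℝ)
    (V : Fin (2 * m) → Matrix (Fin n) (Fin p) ℝ)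
    (horth : ∀ i j, finner (V i) (V j) = if i = j then 1 else 0)
    (W : Matrix (Fin n) (Fin p) ℝ)
    (hWnorm : fnorm W = 1) (hWorth : ∀ i, finner W (V i) = 0)
    (τ : Fin 2 → ℝ)
    (hArnoldi : ∀ j, A * V j =
      (∑ i, T i j • V i) + (Matrix.vecMul τ (Ecols m)ᵀ j) • W)
    (β : ℝ)
    (U : ℝ → Matrix (Fin n) (Fin p) ℝ)
    (hU : ∀ t, U t = β • ∑ i,
      ((NormedSpace.exp ((-t) • T)).mulVec (Pi.single ⟨0, by omega⟩ 1)) i • V i)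
    (U' : ℝ → Matrix (Fin n) (Fin p) ℝ)
    (hU' : ∀ t i j, HasDerivAt (fun τ' => U τ' i j) (U' t i j) t)
    (t : ℝ) :
    U' t + A * U t =
      β • (Matrix.vecMul τ (Ecols m)ᵀ ⬝ᵥ
        (NormedSpace.exp ((-t) • T)).mulVec (Pi.single ⟨0, by omega⟩ 1)) • W ∧
    fnorm (U' t + A * U t) =
      |β| * |Matrix.vecMul τ (Ecols m)ᵀ ⬝ᵥ
        (NormedSpace.exp ((-t) • T)).mulVec (Pi.single ⟨0, by omega⟩ 1)| := by
  set z : Fin (2 * m) := ⟨0, by omega⟩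
  set f : ℝ → Fin (2 * m) → ℝ :=
    fun s => (NormedSpace.exp ((-s) • T)).mulVec (Pi.single z 1) with hf
  set c : Fin (2 * m) → ℝ := Matrix.vecMul τ (Ecols m)ᵀ with hc
  have hfe : ∀ s k, f s k = (NormedSpace.exp ((-s) • T)) k z := by
    intro s k; simp [hf]
  have hfd : ∀ k, HasDerivAt (fun s => f s k) (-(T.mulVec (f t) k)) t := by
    intro k
    have h0 := exp_entry_hasDerivAt T t k z
    have h1 : HasDerivAt (fun s => f s k) ((-T * NormedSpace.exp ((-t) • T)) k z) t := by
      refine h0.congr_of_eventuallyEq ?_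
      filter_upwards with s; rw [hfe]
    convert h1 using 1
    simp [Matrix.mul_apply, Matrix.mulVec, dotProduct, hfe, Finset.sum_neg_distrib]
  have hUd : ∀ i j, HasDerivAt (fun s => U s i j)
      ((β • ∑ k, (-(T.mulVec (f t) k)) • V k) i j) t := by
    intro i j
    have hval : ∀ s, U s i j = β * ∑ k, f s k * V k i j := by
      intro s; rw [hU s]; simp [Matrix.sum_apply, hf]
    have hd : HasDerivAt (fun s => β * ∑ k, f s k * V k i j)
        (β * ∑ k, (-(T.mulVec (f t) k)) * V k i j) t := by
      apply HasDerivAt.const_mul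
      exact HasDerivAt.fun_sum fun k _ => (hfd k).mul_const _
    have heq : (fun s => U s i j) =ᶠ[nhds t] (fun s => β * ∑ k, f s k * V k i j) := by
      filter_upwards with s; rw [hval s]
    have := hd.congr_of_eventuallyEq heq
    simpa [Matrix.sum_apply] using this
  have hU'eq : U' t = β • ∑ k, (-(T.mulVec (f t) k)) • V k := by
    ext i j
    exact (hU' t i j).unique (hUd i j)
  have hswap : ∑ k, f t k • ∑ i, T i k • V i = ∑ i, (T.mulVec (f t) i) • V i := by
    calc ∑ k, f t k • ∑ i, T i k • V i
        = ∑ k, ∑ i, (f t k * T i k) • V i := by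
          simp [Finset.smul_sum, smul_smul]
      _ = ∑ i, ∑ k, (f t k * T i k) • V i := Finset.sum_comm
      _ = ∑ i, (T.mulVec (f t) i) • V i := by
          refine Finset.sum_congr rfl fun i _ => ?_
          rw [← Finset.sum_smul]
          congr 1
          simp [Matrix.mulVec, dotProduct, mul_comm]
  have hAU : A * U t = β • ((∑ k, (T.mulVec (f t) k) • V k) + (c ⬝ᵥ f t) • W) := by
    rw [hU t, Matrix.mul_smul, Matrix.mul_sum]
    congr 1
    have hms : ∀ k, A * (f t k • V k) = f t k • (A * V k) := fun k => Matrix.mul_smul _ _ _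
    rw [show (NormedSpace.exp ((-t) • T)).mulVec (Pi.single z 1) = f t from rfl]
    simp_rw [hms, hArnoldi, smul_add, Finset.sum_add_distrib]
    rw [hswap]
    congr 1
    simp_rw [smul_smul]
    rw [← Finset.sum_smul]
    congr 1
    simp [dotProduct, mul_comm]
  have hR : U' t + A * U t = β • (c ⬝ᵥ f t) • W := by
    rw [hU'eq, hAU, smul_add, ← add_assoc, ← smul_add, ← Finset.sum_add_distrib]
    have : ∑ k, ((-(T.mulVec (f t) k)) • V k + (T.mulVec (f t) k) • V k) = 0 := by
      refine Finset.sum_eq_zero fun k _ => ?_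
      rw [← add_smul, neg_add_cancel, zero_smul]
    rw [this, smul_zero, zero_add]
  refine ⟨hR, ?_⟩
  rw [hR]
  have hWW : finner W W = 1 := by
    have := hWnorm
    rwa [fnorm, Real.sqrt_eq_one] at this
  rw [smul_smul, fnorm, finner_smul_smul, hWW, mul_one, ← sq, Real.sqrt_sq_eq_abs, abs_mul]
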